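/- Let p ≥ 1 and let A, B be ℂ-linear endomorphisms of ℂ^p. Then the pair (A, B) is semistable — i.e., every pair of linear subspaces V, W ⊆ ℂ^p with A(V) ⊆ W and B(V) ⊆ W satisfies dim W ≥ dim V — if and only if there exists a real number t such that A + tB is invertible. -/

import Mathlib

open Module Submodule Finset

private lemma mem_span_of_relation {ι : Type*} [Fintype ι] {M : Type*} [AddCommGroup M]
    [Module ℂ M] (y : ι → M) (d : ι → ℂ) (j : ι) (hdj : d j ≠ 0)
    (hsum : ∑ i, d i • y i = 0) (T : Set ι) (hT : ∀ i, d i ≠ 0 → i ≠ j → i ∈ T) :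
    y j ∈ Submodule.span ℂ (y '' T) := by
  classical
  have h1 : d j • y j + ∑ i ∈ Finset.univ.erase j, d i • y i = 0 := by
    rw [Finset.add_sum_erase Finset.univ (fun i => d i • y i) (Finset.mem_univ j)]
    exact hsum
  have h2 : ∑ i ∈ Finset.univ.erase j, d i • y i ∈ Submodule.span ℂ (y '' T) := by
    refine Submodule.sum_mem _ fun i hi => ?_
    by_cases hdi : d i = 0
    · simp [hdi]
    · exact Submodule.smul_mem _ _
        (Submodule.subset_span ⟨i, hT i hdi (Finset.ne_of_mem_erase hi), rfl⟩)
  have hyj : y j = (-(d j)⁻¹) • ∑ i ∈ Finset.univ.erase j, d i • y i := by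
    have h3 : d j • y j = -∑ i ∈ Finset.univ.erase j, d i • y i := by
      rw [eq_neg_iff_add_eq_zero]; exact h1
    rw [neg_smul, ← smul_neg, ← h3, smul_smul, inv_mul_cancel₀ hdj, one_smul]
  rw [hyj]
  exact Submodule.smul_mem _ _ h2

/-- A pair `(A, B)` of endomorphisms of `ℂ^p` is semistable (every pair of
subspaces `V, W` with `A(V) ⊆ W` and `B(V) ⊆ W` satisfies `dim W ≥ dim V`) if and only if
`A + t B` is invertible for some real `t`. -/
theorem semistable_pair_iff_exists_invertible (p : ℕ) (hp : 1 ≤ p)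
    (A B : Module.End ℂ (Fin p → ℂ)) :
    (∀ V W : Submodule ℂ (Fin p → ℂ), V.map A ≤ W → V.map B ≤ W →
      Module.finrank ℂ V ≤ Module.finrank ℂ W) ↔
    ∃ t : ℝ, IsUnit (A + (t : ℂ) • B) := by
  classical
  constructor
  · intro h
    by_contra hno
    push_neg at hno
    -- notation for the scalars
    set t : Fin (p + 1) → ℂ := fun i => ((i : ℕ) : ℂ) with ht
    have htinj : Function.Injective t := by
      intro i j hij
      have : ((i : ℕ) : ℂ) = ((j : ℕ) : ℂ) := hij
      exact Fin.ext (Nat.cast_injective this)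
    -- a kernel vector for each i
    have hker : ∀ i : Fin (p + 1), ∃ x : Fin p → ℂ, x ≠ 0 ∧ A x + t i • B x = 0 := by
      intro i
      have hni := hno ((i : ℕ) : ℝ)
      have hcast : ((((i : ℕ) : ℝ)) : ℂ) = t i := by push_cast; rfl
      rw [hcast] at hni
      rw [LinearMap.isUnit_iff_ker_eq_bot] at hni
      obtain ⟨x, hx, hx0⟩ := (Submodule.ne_bot_iff _).mp hni
      exact ⟨x, hx0, hx⟩
    choose x hx0 hxeq using hker
    have hAx : ∀ i, A (x i) = -(t i • B (x i)) := fun i =>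
      eq_neg_of_add_eq_zero_left (hxeq i)
    -- the x i are linearly dependent
    have hdep : ¬ LinearIndependent ℂ x := by
      intro hli
      have := hli.fintype_card_le_finrank
      rw [Module.finrank_fin_fun, Fintype.card_fin] at this
      omega
    obtain ⟨g, hgsum, hgne⟩ := Fintype.not_linearIndependent_iff.mp hdep
    -- minimal support relation
    set Q : ℕ → Prop := fun n => ∃ c : Fin (p + 1) → ℂ,
      (∑ i, c i • x i = 0) ∧ (∃ i, c i ≠ 0) ∧
      (Finset.univ.filter fun i => c i ≠ 0).card = n with hQ
    have hQex : ∃ n, Q n := ⟨_, g, hgsum, hgne, rfl⟩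
    obtain ⟨c, hcsum, hcne, hcard⟩ := Nat.find_spec hQex
    set n₀ : ℕ := Nat.find hQex with hn₀
    set S : Finset (Fin (p + 1)) := Finset.univ.filter fun i => c i ≠ 0 with hS
    have hmemS : ∀ i, i ∈ S ↔ c i ≠ 0 := by
      intro i; simp [hS]
    -- |S| ≥ 2
    have hS2 : 2 ≤ S.card := by
      by_contra hlt
      push_neg at hlt
      obtain ⟨j, hj⟩ := hcne
      have hjS : j ∈ S := (hmemS j).mpr hj
      have h1 : S.card = 1 := le_antisymm (by omega) (Finset.card_pos.mpr ⟨j, hjS⟩)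
      obtain ⟨a, ha⟩ := Finset.card_eq_one.mp h1
      have hja : j = a := by simpa [ha] using hjS
      subst hja
      have : ∑ i, c i • x i = c j • x j := by
        refine Finset.sum_eq_single j (fun i _ hij => ?_) (by simp)
        have : i ∉ S := by rw [ha]; simp [hij]
        rw [not_not.mp (fun hc => this ((hmemS i).mpr hc))]
        simp
      rw [this] at hcsum
      rcases smul_eq_zero.mp hcsum with h | h
      · exact hj h
      · exact hx0 j h
    have hScard : S.card = n₀ := hcard
    obtain ⟨j, hjS, k, hkS, hjk⟩ := Finset.one_lt_card.mp (by omega : 1 < S.card)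
    -- linear independence of x on S.erase j
    have hli : LinearIndependent ℂ (fun i : (S.erase j : Finset (Fin (p + 1))) =>
        x (i : Fin (p + 1))) := by
      by_contra hnli
      obtain ⟨g', hg'sum, i₀, hi₀⟩ := Fintype.not_linearIndependent_iff.mp hnli
      set c' : Fin (p + 1) → ℂ := fun i =>
        if h : i ∈ S.erase j then g' ⟨i, h⟩ else 0 with hc'
      have hc'sum : ∑ i, c' i • x i = 0 := by
        rw [← Finset.sum_subset (Finset.subset_univ (S.erase j))
          (fun i _ hi => by
            show c' i • x i = 0
            rw [show c' i = 0 from dif_neg hi, zero_smul])]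
        rw [← Finset.sum_attach (S.erase j) (fun i => c' i • x i)]
        rw [← hg'sum]
        refine Finset.sum_congr rfl fun i _ => ?_
        show c' i.1 • x i.1 = g' i • x i.1
        congr 1
        show (if h : i.1 ∈ S.erase j then g' ⟨i.1, h⟩ else 0) = g' i
        rw [dif_pos i.2]
      have hc'ne : ∃ i, c' i ≠ 0 := by
        refine ⟨i₀, ?_⟩
        show (if h : i₀.1 ∈ S.erase j then g' ⟨i₀.1, h⟩ else 0) ≠ 0
        rw [dif_pos i₀.2]
        simpa using hi₀
      have hsub : (Finset.univ.filter fun i => c' i ≠ 0) ⊆ S.erase j := by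
        intro i hi
        simp only [Finset.mem_filter] at hi
        by_contra hni
        exact hi.2 (show c' i = 0 from dif_neg hni)
      have hcardlt : (Finset.univ.filter fun i => c' i ≠ 0).card < n₀ := by
        have h1 := Finset.card_le_card hsub
        have h2 : (S.erase j).card = S.card - 1 := Finset.card_erase_of_mem hjS
        omega
      exact Nat.find_min hQex hcardlt ⟨c', hc'sum, hc'ne, rfl⟩
    -- relations among the B (x i)
    have hR1 : ∑ i, c i • B (x i) = 0 := by
      have := congrArg B hcsum
      rw [map_sum] at this
      simpa using this
    have hR2 : ∑ i, (t i * c i) • B (x i) = 0 := by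
      have := congrArg A hcsum
      rw [map_sum] at this
      simp only [map_smul, hAx, smul_neg, map_zero] at this
      rw [← neg_eq_zero, ← Finset.sum_neg_distrib] at this
      rw [← this]
      refine Finset.sum_congr rfl fun i _ => ?_
      rw [neg_neg, smul_smul, mul_comm]
    have hRelim : ∀ a : Fin (p + 1), ∑ i, ((t a - t i) * c i) • B (x i) = 0 := by
      intro a
      have : ∑ i, ((t a - t i) * c i) • B (x i)
          = t a • (∑ i, c i • B (x i)) - ∑ i, (t i * c i) • B (x i) := by
        rw [Finset.smul_sum, ← Finset.sum_sub_distrib]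
        refine Finset.sum_congr rfl fun i _ => ?_
        rw [sub_mul, sub_smul, smul_smul]
      rw [this, hR1, hR2, smul_zero, sub_zero]
    -- the two subspaces violating semistability
    set V : Submodule ℂ (Fin p → ℂ) := Submodule.span ℂ (x '' ↑S) with hV
    set W : Submodule ℂ (Fin p → ℂ) :=
      Submodule.span ℂ ((fun i => B (x i)) '' ↑S) with hW
    have hBW : ∀ i ∈ S, B (x i) ∈ W := fun i hi =>
      Submodule.subset_span ⟨i, hi, rfl⟩
    have hAV : V.map A ≤ W := by
      rw [hV, Submodule.map_span, Submodule.span_le]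
      rintro _ ⟨_, ⟨i, hi, rfl⟩, rfl⟩
      rw [hAx i]
      exact neg_mem (Submodule.smul_mem _ _ (hBW i hi))
    have hBV : V.map B ≤ W := by
      rw [hV, Submodule.map_span, Submodule.span_le]
      rintro _ ⟨_, ⟨i, hi, rfl⟩, rfl⟩
      exact hBW i hi
    have hdim := h V W hAV hBV
    -- lower bound on dim V
    have hVlow : n₀ - 1 ≤ finrank ℂ V := by
      have h1 := finrank_span_eq_card hli
      have h2 : Set.range (fun i : (S.erase j : Finset (Fin (p + 1))) =>
          x (i : Fin (p + 1))) = x '' ↑(S.erase j) := by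
        rw [Set.image_eq_range]; rfl
      rw [h2] at h1
      have h3 : Submodule.span ℂ (x '' ↑(S.erase j)) ≤ V :=
        Submodule.span_mono (Set.image_mono (by exact_mod_cast Finset.erase_subset j S))
      have h4 := Submodule.finrank_mono h3
      rw [h1] at h4
      simp only [Fintype.card_coe] at h4
      rw [Finset.card_erase_of_mem hjS, hScard] at h4
      exact h4
    -- upper bound on dim W
    have hkej : k ∈ S.erase j := Finset.mem_erase.mpr ⟨fun hkj => hjk hkj.symm, hkS⟩
    set T : Finset (Fin (p + 1)) := (S.erase j).erase k with hT
    have hWle : W ≤ Submodule.span ℂ ((fun i => B (x i)) '' ↑T) := by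
      rw [hW, Submodule.span_le]
      rintro _ ⟨i, hi, rfl⟩
      by_cases hij : i = j
      · subst hij
        refine mem_span_of_relation _ (fun i => (t k - t i) * c i) i ?_ (hRelim k) _ ?_
        · exact mul_ne_zero (sub_ne_zero.mpr fun hq => hjk (htinj hq).symm)
            ((hmemS i).mp hi)
        · intro i' hdi' hi'j
          have hci' : c i' ≠ 0 := fun hc =>
            hdi' (show (t k - t i') * c i' = 0 by rw [hc, mul_zero])
          have hti' : t k - t i' ≠ 0 := fun hc =>
            hdi' (show (t k - t i') * c i' = 0 by rw [hc, zero_mul])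
          have hi'k : i' ≠ k := fun hc => hti' (by rw [hc, sub_self])
          exact Finset.mem_coe.mpr (Finset.mem_erase.mpr ⟨hi'k,
            Finset.mem_erase.mpr ⟨hi'j, (hmemS i').mpr hci'⟩⟩)
      · by_cases hik : i = k
        · subst hik
          refine mem_span_of_relation _ (fun i' => (t j - t i') * c i') i ?_ (hRelim j) _ ?_
          · exact mul_ne_zero (sub_ne_zero.mpr fun hq => hjk (htinj hq)) ((hmemS i).mp hi)
          · intro i' hdi' hi'k
            have hci' : c i' ≠ 0 := fun hc =>
              hdi' (show (t j - t i') * c i' = 0 by rw [hc, mul_zero])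
            have hti' : t j - t i' ≠ 0 := fun hc =>
              hdi' (show (t j - t i') * c i' = 0 by rw [hc, zero_mul])
            have hi'j : i' ≠ j := fun hc => hti' (by rw [hc, sub_self])
            exact Finset.mem_coe.mpr (Finset.mem_erase.mpr ⟨hi'k,
              Finset.mem_erase.mpr ⟨hi'j, (hmemS i').mpr hci'⟩⟩)
        · exact Submodule.subset_span ⟨i, Finset.mem_coe.mpr
            (Finset.mem_erase.mpr ⟨hik, Finset.mem_erase.mpr ⟨hij, hi⟩⟩), rfl⟩
    have hWhigh : finrank ℂ W ≤ n₀ - 2 := by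
      have h1 := Submodule.finrank_mono hWle
      have h2 : ((fun i => B (x i)) '' ↑T : Set (Fin p → ℂ))
          = ↑(T.image fun i => B (x i)) := by
        rw [Finset.coe_image]
      rw [h2] at h1
      have h3 := finrank_span_finset_le_card (R := ℂ) (T.image fun i => B (x i))
      have h4 := Finset.card_image_le (s := T) (f := fun i => B (x i))
      have h5 : T.card = n₀ - 2 := by
        rw [hT, Finset.card_erase_of_mem hkej, Finset.card_erase_of_mem hjS, hScard]
        omega
      unfold Set.finrank at h3
      omega
    omega
  · rintro ⟨t, hu⟩ V W hA hB
    set f : Module.End ℂ (Fin p → ℂ) := A + (t : ℂ) • B with hf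
    have hbij : Function.Bijective f := Module.End.isUnit_iff f |>.mp hu
    have hfVW : V.map f ≤ W := by
      rintro _ ⟨v, hv, rfl⟩
      have hAv : A v ∈ W := hA ⟨v, hv, rfl⟩
      have hBv : B v ∈ W := hB ⟨v, hv, rfl⟩
      have : f v = A v + (t : ℂ) • B v := rfl
      rw [this]
      exact add_mem hAv (Submodule.smul_mem _ _ hBv)
    have he : finrank ℂ (V.map f) = finrank ℂ V := by
      have := LinearEquiv.finrank_map_eq (LinearEquiv.ofBijective f hbij) V
      rwa [show ((LinearEquiv.ofBijective f hbij : Module.End ℂ (Fin p → ℂ))) = f from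
        LinearMap.ext fun _ => rfl] at this
    calc finrank ℂ V = finrank ℂ (V.map f) := he.symm
      _ ≤ finrank ℂ W := Submodule.finrank_mono hfVW
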